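/- With v_3 defined by the recursive Mex algorithm, for every n ≥ 0 one has v_3(n+1) - v_3(n) ∈ {3, 4, ..., 12}. -/
import Mathlib


/-- Minimum excluded value of a set of natural numbers. -/
noncomputable def mex (S : Set ℕ) : ℕ := sInf {m : ℕ | m ∉ S}

/-- Coordinates of a set of triples. -/
def coords (G : Set (ℕ × ℕ × ℕ)) : Set ℕ :=
  {k | ∃ x ∈ G, k = x.1 ∨ k = x.2.1 ∨ k = x.2.2}

/-- Pairwise coordinate differences of a set of triples. -/
def diffs (G : Set (ℕ × ℕ × ℕ)) : Set ℕ :=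
  {d | ∃ x ∈ G, d = x.2.1 - x.1 ∨ d = x.2.2 - x.2.1 ∨ d = x.2.2 - x.1}

/-- One step of the Mex algorithm: the next P-position. -/
noncomputable def step (G : Set (ℕ × ℕ × ℕ)) : ℕ × ℕ × ℕ :=
  let F := coords G
  let D := diffs G
  let a := mex F
  let b := mex ((fun d => a + d) '' D ∪ Set.Icc 1 a ∪ F)
  let c := mex ((fun d => b + d) '' D ∪ Set.Icc 1 b ∪ F)
  (a, b, c)

/-- The sets `G_n` of P-positions computed by the Mex algorithm. -/
noncomputable def Gset : ℕ → Set (ℕ × ℕ × ℕ)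
  | 0 => {(0, 0, 0)}
  | n + 1 => Gset n ∪ {step (Gset n)}

/-- The `n`-th P-position `(v_1(n), v_2(n), v_3(n))`. -/
noncomputable def v : ℕ → ℕ × ℕ × ℕ
  | 0 => (0, 0, 0)
  | n + 1 => step (Gset n)

noncomputable def v1 (n : ℕ) : ℕ := (v n).1
noncomputable def v2 (n : ℕ) : ℕ := (v n).2.1
noncomputable def v3 (n : ℕ) : ℕ := (v n).2.2

/-- `F_n`: the set of coordinates of elements of `G_n`. -/
noncomputable def Fset (n : ℕ) : Set ℕ := coords (Gset n)

/-- `D_n`: the set of pairwise coordinate differences over `G_n`. -/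
noncomputable def Dset (n : ℕ) : Set ℕ := diffs (Gset n)



-- basic mex lemmas
lemma mem_of_lt_mex {S : Set ℕ} {m : ℕ} (h : m < mex S) : m ∈ S := by
  by_contra hm
  have := Nat.sInf_le (show m ∈ {k : ℕ | k ∉ S} from hm)
  unfold mex at h
  omega

lemma mex_not_mem {S : Set ℕ} (h : ∃ m, m ∉ S) : mex S ∉ S :=
  Nat.sInf_mem h

lemma exists_not_mem_of_finite {S : Set ℕ} (h : S.Finite) : ∃ m, m ∉ S := by
  obtain ⟨m, hm⟩ := h.infinite_compl.nonempty
  exact ⟨m, hm⟩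

lemma mex_eq {S : Set ℕ} {k : ℕ} (hk : k ∉ S) (hlt : ∀ m < k, m ∈ S) : mex S = k := by
  have h1 : mex S ≤ k := Nat.sInf_le hk
  rcases eq_or_lt_of_le h1 with h | h
  · exact h
  · exact absurd (hlt _ h) (mex_not_mem ⟨k, hk⟩)

-- unfolding step
lemma v1_succ (n : ℕ) : v1 (n+1) = mex (Fset n) := rfl
lemma v2_succ (n : ℕ) :
    v2 (n+1) = mex ((fun d => v1 (n+1) + d) '' Dset n ∪ Set.Icc 1 (v1 (n+1)) ∪ Fset n) := rfl
lemma v3_succ (n : ℕ) :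
    v3 (n+1) = mex ((fun d => v2 (n+1) + d) '' Dset n ∪ Set.Icc 1 (v2 (n+1)) ∪ Fset n) := rfl

lemma v1_zero : v1 0 = 0 := rfl
lemma v2_zero : v2 0 = 0 := rfl
lemma v3_zero : v3 0 = 0 := rfl

-- finiteness
lemma Gset_finite (n : ℕ) : (Gset n).Finite := by
  induction n with
  | zero => exact Set.finite_singleton _
  | succ n ih => exact ih.union (Set.finite_singleton _)

lemma coords_finite {G : Set (ℕ × ℕ × ℕ)} (h : G.Finite) : (coords G).Finite := by
  apply Set.Finite.subset (((h.image Prod.fst).union (h.image (fun p => p.2.1))).union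
    (h.image (fun p => p.2.2)))
  rintro k ⟨x, hx, hk | hk | hk⟩
  · exact Or.inl (Or.inl ⟨x, hx, hk.symm⟩)
  · exact Or.inl (Or.inr ⟨x, hx, hk.symm⟩)
  · exact Or.inr ⟨x, hx, hk.symm⟩

lemma diffs_finite {G : Set (ℕ × ℕ × ℕ)} (h : G.Finite) : (diffs G).Finite := by
  apply Set.Finite.subset (((h.image (fun p => p.2.1 - p.1)).union
    (h.image (fun p => p.2.2 - p.2.1))).union (h.image (fun p => p.2.2 - p.1)))
  rintro k ⟨x, hx, hk | hk | hk⟩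
  · exact Or.inl (Or.inl ⟨x, hx, hk.symm⟩)
  · exact Or.inl (Or.inr ⟨x, hx, hk.symm⟩)
  · exact Or.inr ⟨x, hx, hk.symm⟩

lemma Fset_finite (n : ℕ) : (Fset n).Finite := coords_finite (Gset_finite n)
lemma Dset_finite (n : ℕ) : (Dset n).Finite := diffs_finite (Gset_finite n)

-- membership
lemma Gmem {n : ℕ} {p : ℕ × ℕ × ℕ} : p ∈ Gset n ↔ ∃ j ≤ n, p = v j := by
  induction n with
  | zero =>
    constructor
    · intro h; exact ⟨0, le_refl _, h⟩
    · rintro ⟨j, hj, rfl⟩; interval_cases j; exact rfl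
  | succ n ih =>
    constructor
    · rintro (h | h)
      · obtain ⟨j, hj, hp⟩ := ih.1 h; exact ⟨j, by omega, hp⟩
      · exact ⟨n+1, le_refl _, h⟩
    · rintro ⟨j, hj, rfl⟩
      rcases Nat.lt_or_ge j (n+1) with h | h
      · exact Or.inl (ih.2 ⟨j, by omega, rfl⟩)
      · have : j = n + 1 := by omega
        subst this; exact Or.inr rfl

lemma Fmem {n k : ℕ} : k ∈ Fset n ↔ ∃ j ≤ n, k = v1 j ∨ k = v2 j ∨ k = v3 j := by
  constructor
  · rintro ⟨x, hx, hk⟩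
    obtain ⟨j, hj, rfl⟩ := Gmem.1 hx
    exact ⟨j, hj, hk⟩
  · rintro ⟨j, hj, hk⟩
    exact ⟨v j, Gmem.2 ⟨j, hj, rfl⟩, hk⟩

lemma Dmem {n k : ℕ} : k ∈ Dset n ↔
    ∃ j ≤ n, k = v2 j - v1 j ∨ k = v3 j - v2 j ∨ k = v3 j - v1 j := by
  constructor
  · rintro ⟨x, hx, hk⟩
    obtain ⟨j, hj, rfl⟩ := Gmem.1 hx
    exact ⟨j, hj, hk⟩
  · rintro ⟨j, hj, hk⟩
    exact ⟨v j, Gmem.2 ⟨j, hj, rfl⟩, hk⟩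

lemma Fset_mono {m n : ℕ} (h : m ≤ n) : Fset m ⊆ Fset n := by
  intro k hk
  obtain ⟨j, hj, hh⟩ := Fmem.1 hk
  exact Fmem.2 ⟨j, le_trans hj h, hh⟩

lemma zero_mem_F (n : ℕ) : 0 ∈ Fset n := Fmem.2 ⟨0, Nat.zero_le _, Or.inl rfl⟩
lemma zero_mem_D (n : ℕ) : 0 ∈ Dset n := Dmem.2 ⟨0, Nat.zero_le _, Or.inl rfl⟩

-- computing v 1
lemma Fset0 : Fset 0 = {0} := by
  ext k
  simp only [Set.mem_singleton_iff]
  constructor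
  · intro h
    obtain ⟨j, hj, hh⟩ := Fmem.1 h
    interval_cases j
    rcases hh with h | h | h <;> simp [v1_zero, v2_zero, v3_zero] at h <;> omega
  · rintro rfl; exact zero_mem_F 0

lemma Dset0 : Dset 0 = {0} := by
  ext k
  simp only [Set.mem_singleton_iff]
  constructor
  · intro h
    obtain ⟨j, hj, hh⟩ := Dmem.1 h
    interval_cases j
    rcases hh with h | h | h <;> simp [v1_zero, v2_zero, v3_zero] at h <;> omega
  · rintro rfl; exact zero_mem_D 0

lemma v1_one : v1 1 = 1 := by
  rw [show (1:ℕ) = 0 + 1 from rfl, v1_succ, Fset0]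
  apply mex_eq (by simp)
  intro m hm
  interval_cases m
  · simp

lemma v2_one : v2 1 = 2 := by
  rw [show (1:ℕ) = 0 + 1 from rfl, v2_succ, Dset0, show v1 (0+1) = 1 from v1_one]
  have : ((fun d => 1 + d) '' ({0} : Set ℕ) ∪ Set.Icc 1 1 ∪ Fset 0) = {0, 1} := by
    rw [Fset0]
    ext k
    simp [Set.mem_Icc]
  rw [this]
  apply mex_eq (by simp)
  intro m hm
  interval_cases m <;> simp

lemma v3_one : v3 1 = 3 := by
  rw [show (1:ℕ) = 0 + 1 from rfl, v3_succ, Dset0, show v2 (0+1) = 2 from v2_one]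
  have : ((fun d => 2 + d) '' {0} ∪ Set.Icc 1 2 ∪ Fset 0) = {0, 1, 2} := by
    rw [Fset0]
    ext k
    simp [Set.mem_Icc]
    omega
  rw [this]
  apply mex_eq (by simp)
  intro m hm
  interval_cases m <;> simp

-- The invariant
def Good (n : ℕ) : Prop :=
  1 ≤ v1 n ∧ v1 n < v2 n ∧ v2 n < v3 n ∧
  v2 n - v1 n ≤ (v3 n - v2 n) + 2 ∧
  v3 n - v2 n ≤ v2 n - v1 n ∧
  (∀ k, 1 ≤ k → k ≤ v3 n - v2 n → k ∈ Dset n) ∧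
  (v2 n - v1 n = (v3 n - v2 n) + 2 → (v3 n - v2 n) + 1 ∈ Dset n) ∧
  (∀ k ∈ Fset n, k ≤ v3 n) ∧
  (2 ≤ n →
    v1 (n-1) + 1 ≤ v1 n ∧ v1 n ≤ v1 (n-1) + 4 ∧
    v2 (n-1) + 2 ≤ v2 n ∧
    v3 (n-1) + 3 ≤ v3 n ∧ v3 n ≤ v3 (n-1) + 12 ∧
    v2 (n-1) - v1 (n-1) < v2 n - v1 n ∧
    v3 (n-1) - v2 (n-1) < v3 n - v2 n ∧
    v3 n - v2 n ≤ (v3 (n-1) - v2 (n-1)) + 4 ∧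
    v3 (n-1) - v1 (n-1) + 2 ≤ v3 n - v1 n ∧
    v2 (n-1) - v1 (n-1) < v3 n - v2 n)

lemma Good_one : Good 1 := by
  refine ⟨?_, ?_, ?_, ?_, ?_, ?_, ?_, ?_, ?_⟩ <;>
    simp only [v1_one, v2_one, v3_one]
  · omega
  · omega
  · omega
  · omega
  · omega
  · intro k h1 h2
    have : k = 1 := by omega
    subst this
    exact Dmem.2 ⟨1, le_refl _, Or.inl (by simp [v1_one, v2_one])⟩
  · omega
  · intro k hk
    obtain ⟨j, hj, hh⟩ := Fmem.1 hk
    interval_cases j <;>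
      rcases hh with h | h | h <;>
        simp [v1_zero, v2_zero, v3_zero, v1_one, v2_one, v3_one] at h <;> omega
  · omega

-- chaining consecutive gaps
lemma chain_ge {n : ℕ} (P : ℕ → ℕ) (c : ℕ)
    (g : ∀ j, 2 ≤ j → j ≤ n → P (j-1) + c ≤ P j) :
    ∀ i j, 1 ≤ i → i < j → j ≤ n → P i + c ≤ P j := by
  intro i j hi hij hj
  induction j with
  | zero => omega
  | succ j ih =>
    rcases Nat.lt_or_ge i j with h | h
    · have h1 := ih h (by omega)
      have h2 := g (j+1) (by omega) hj
      simp only [Nat.add_sub_cancel] at h2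
      omega
    · have : i = j := by omega
      subst this
      have h2 := g (i+1) (by omega) hj
      simpa using h2

section pairwise
variable {n : ℕ} (H : ∀ j, 1 ≤ j → j ≤ n → Good j)

include H

lemma gv1 : ∀ i j, 1 ≤ i → i < j → j ≤ n → v1 i + 1 ≤ v1 j := by
  apply chain_ge
  intro j h2 hj
  exact ((H j (by omega) hj).2.2.2.2.2.2.2.2 h2).1

lemma gv2 : ∀ i j, 1 ≤ i → i < j → j ≤ n → v2 i + 2 ≤ v2 j := by
  apply chain_ge
  intro j h2 hj
  exact ((H j (by omega) hj).2.2.2.2.2.2.2.2 h2).2.2.1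

lemma gv3 : ∀ i j, 1 ≤ i → i < j → j ≤ n → v3 i + 3 ≤ v3 j := by
  apply chain_ge
  intro j h2 hj
  exact ((H j (by omega) hj).2.2.2.2.2.2.2.2 h2).2.2.2.1

lemma gx : ∀ i j, 1 ≤ i → i < j → j ≤ n → (v2 i - v1 i) + 1 ≤ v2 j - v1 j := by
  apply chain_ge
  intro j h2 hj
  have := ((H j (by omega) hj).2.2.2.2.2.2.2.2 h2).2.2.2.2.2.1
  omega

lemma gy : ∀ i j, 1 ≤ i → i < j → j ≤ n → (v3 i - v2 i) + 1 ≤ v3 j - v2 j := by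
  apply chain_ge
  intro j h2 hj
  have := ((H j (by omega) hj).2.2.2.2.2.2.2.2 h2).2.2.2.2.2.2.1
  omega

lemma gz : ∀ i j, 1 ≤ i → i < j → j ≤ n → (v3 i - v1 i) + 2 ≤ v3 j - v1 j := by
  apply chain_ge
  intro j h2 hj
  exact ((H j (by omega) hj).2.2.2.2.2.2.2.2 h2).2.2.2.2.2.2.2.2.1

lemma gxy : ∀ i j, 1 ≤ i → i < j → j ≤ n → v2 i - v1 i < v3 j - v2 j := by
  intro i j hi hij hj
  have h1 : v2 i - v1 i < v3 (i+1) - v2 (i+1) := by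
    have := ((H (i+1) (by omega) (by omega)).2.2.2.2.2.2.2.2 (by omega)).2.2.2.2.2.2.2.2.2
    simpa using this
  rcases Nat.lt_or_ge (i+1) j with h | h
  · have := gy H (i+1) j (by omega) h hj
    omega
  · have : j = i + 1 := by omega
    subst this; exact h1

-- "two distinct values" lemmas
lemma twoB : ∀ i j, 1 ≤ i → 1 ≤ j → i ≤ n → j ≤ n → v2 i ≠ v2 j →
    v2 i + 2 ≤ v2 j ∨ v2 j + 2 ≤ v2 i := by
  intro i j hi hj hin hjn hne
  rcases lt_trichotomy i j with h | h | h
  · exact Or.inl (gv2 H i j hi h hjn)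
  · subst h; omega
  · exact Or.inr (gv2 H j i hj h hin)

lemma twoC : ∀ i j, 1 ≤ i → 1 ≤ j → i ≤ n → j ≤ n → v3 i ≠ v3 j →
    v3 i + 3 ≤ v3 j ∨ v3 j + 3 ≤ v3 i := by
  intro i j hi hj hin hjn hne
  rcases lt_trichotomy i j with h | h | h
  · exact Or.inl (gv3 H i j hi h hjn)
  · subst h; omega
  · exact Or.inr (gv3 H j i hj h hin)

lemma twoZ : ∀ i j, 1 ≤ i → 1 ≤ j → i ≤ n → j ≤ n → v3 i - v1 i ≠ v3 j - v1 j →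
    (v3 i - v1 i) + 2 ≤ v3 j - v1 j ∨ (v3 j - v1 j) + 2 ≤ v3 i - v1 i := by
  intro i j hi hj hin hjn hne
  rcases lt_trichotomy i j with h | h | h
  · exact Or.inl (gz H i j hi h hjn)
  · subst h; omega
  · exact Or.inr (gz H j i hj h hin)

end pairwise

lemma Dset_mono {m n : ℕ} (h : m ≤ n) : Dset m ⊆ Dset n := by
  intro k hk
  obtain ⟨j, hj, hh⟩ := Dmem.1 hk
  exact Dmem.2 ⟨j, le_trans hj h, hh⟩

lemma step_a {n : ℕ} (hn : 1 ≤ n) (H : ∀ j, 1 ≤ j → j ≤ n → Good j) :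
    v1 n < v1 (n+1) ∧ v1 (n+1) ≤ v1 n + 4 ∧ v1 (n+1) ∉ Fset n ∧
      (∀ m < v1 (n+1), m ∈ Fset n) := by
  obtain ⟨h1n, hABn, hBCn, _, _, _, _, _, _⟩ := H n hn le_rfl
  have hAnot : v1 (n+1) ∉ Fset n := by
    rw [v1_succ]
    exact mex_not_mem (exists_not_mem_of_finite (Fset_finite n))
  have hAlt : ∀ m < v1 (n+1), m ∈ Fset n := by
    intro m hm
    rw [v1_succ] at hm
    exact mem_of_lt_mex hm
  have hv1mem : v1 n ∈ Fset n := Fmem.2 ⟨n, le_rfl, Or.inl rfl⟩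
  have hv1n_eq : v1 n = mex (Fset (n-1)) := by
    conv_lhs => rw [show n = (n-1)+1 by omega]
    rw [v1_succ]
  have ha_gt : v1 n < v1 (n+1) := by
    rcases lt_trichotomy (v1 (n+1)) (v1 n) with h | h | h
    · exfalso
      have : v1 (n+1) ∈ Fset (n-1) := by
        rw [hv1n_eq] at h
        exact mem_of_lt_mex h
      exact hAnot (Fset_mono (by omega) this)
    · exact absurd (h ▸ hv1mem) hAnot
    · exact h
  refine ⟨ha_gt, ?_, hAnot, hAlt⟩
  by_contra hcon
  push_neg at hcon
  have classify : ∀ m, v1 n < m → m ∈ Fset n →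
      ∃ j, 1 ≤ j ∧ j ≤ n ∧ (m = v2 j ∨ m = v3 j) := by
    intro m hm hmem
    obtain ⟨j, hj, hc⟩ := Fmem.1 hmem
    have hj1 : 1 ≤ j := by
      rcases Nat.eq_zero_or_pos j with rfl | h
      · exfalso
        rcases hc with h | h | h <;> rw [h] at hm <;>
          simp [v1_zero, v2_zero, v3_zero] at hm <;> omega
      · exact h
    rcases hc with hc | hc | hc
    · exfalso
      have : v1 j ≤ v1 n := by
        rcases Nat.lt_or_ge j n with h | h
        · have := gv1 H j n hj1 h le_rfl; omega
        · have : j = n := by omega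
          subst this; omega
      omega
    · exact ⟨j, hj1, hj, Or.inl hc⟩
    · exact ⟨j, hj1, hj, Or.inr hc⟩
  obtain ⟨j1, hj1a, hj1b, hc1⟩ := classify (v1 n + 1) (by omega) (hAlt _ (by omega))
  obtain ⟨j2, hj2a, hj2b, hc2⟩ := classify (v1 n + 2) (by omega) (hAlt _ (by omega))
  obtain ⟨j3, hj3a, hj3b, hc3⟩ := classify (v1 n + 3) (by omega) (hAlt _ (by omega))
  obtain ⟨j4, hj4a, hj4b, hc4⟩ := classify (v1 n + 4) (by omega) (hAlt _ (by omega))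
  rcases hc1 with h1 | h1
  · -- B
    rcases hc2 with h2 | h2
    · -- B
      rcases hc3 with h3 | h3
      · -- B
        rcases hc4 with h4 | h4
        · -- B
          have := twoB H j1 j2 hj1a hj2a hj1b hj2b (by omega)
          omega
        · -- C
          have := twoB H j1 j2 hj1a hj2a hj1b hj2b (by omega)
          omega
      · -- C
        rcases hc4 with h4 | h4
        · -- B
          have := twoB H j1 j2 hj1a hj2a hj1b hj2b (by omega)
          omega
        · -- C
          have := twoB H j1 j2 hj1a hj2a hj1b hj2b (by omega)
          omega
    · -- C
      rcases hc3 with h3 | h3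
      · -- B
        rcases hc4 with h4 | h4
        · -- B
          have := twoB H j3 j4 hj3a hj4a hj3b hj4b (by omega)
          omega
        · -- C
          have := twoC H j2 j4 hj2a hj4a hj2b hj4b (by omega)
          omega
      · -- C
        rcases hc4 with h4 | h4
        · -- B
          have := twoC H j2 j3 hj2a hj3a hj2b hj3b (by omega)
          omega
        · -- C
          have := twoC H j2 j3 hj2a hj3a hj2b hj3b (by omega)
          omega
  · -- C
    rcases hc2 with h2 | h2
    · -- B
      rcases hc3 with h3 | h3
      · -- B
        rcases hc4 with h4 | h4
        · -- B
          have := twoB H j2 j3 hj2a hj3a hj2b hj3b (by omega)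
          omega
        · -- C
          have := twoB H j2 j3 hj2a hj3a hj2b hj3b (by omega)
          omega
      · -- C
        rcases hc4 with h4 | h4
        · -- B
          have := twoC H j1 j3 hj1a hj3a hj1b hj3b (by omega)
          omega
        · -- C
          have := twoC H j1 j3 hj1a hj3a hj1b hj3b (by omega)
          omega
    · -- C
      rcases hc3 with h3 | h3
      · -- B
        rcases hc4 with h4 | h4
        · -- B
          have := twoB H j3 j4 hj3a hj4a hj3b hj4b (by omega)
          omega
        · -- C
          have := twoC H j1 j2 hj1a hj2a hj1b hj2b (by omega)
          omega
      · -- C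
        rcases hc4 with h4 | h4
        · -- B
          have := twoC H j1 j2 hj1a hj2a hj1b hj2b (by omega)
          omega
        · -- C
          have := twoC H j1 j2 hj1a hj2a hj1b hj2b (by omega)
          omega

lemma step_t {n : ℕ} (hn : 1 ≤ n) (H : ∀ j, 1 ≤ j → j ≤ n → Good j) :
    (v3 n - v2 n) + 1 ≤ mex (Dset n) ∧ mex (Dset n) ≤ (v3 n - v2 n) + 4 ∧
      (mex (Dset n) = (v3 n - v2 n) + 4 → v2 n - v1 n = (v3 n - v2 n) + 2) ∧
      mex (Dset n) ∉ Dset n ∧ (∀ m < mex (Dset n), m ∈ Dset n) ∧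
      (v2 n - v1 n) < mex (Dset n) := by
  obtain ⟨h1n, hABn, hBCn, hE2n, _, hDlow, hKn, _, _⟩ := H n hn le_rfl
  set t := mex (Dset n) with ht
  have htnot : t ∉ Dset n := mex_not_mem (exists_not_mem_of_finite (Dset_finite n))
  have htlt : ∀ m < t, m ∈ Dset n := fun m hm => mem_of_lt_mex hm
  have hyt : (v3 n - v2 n) + 1 ≤ t := by
    by_contra h
    push_neg at h
    rcases Nat.eq_zero_or_pos t with h0 | h0
    · exact htnot (h0 ▸ zero_mem_D n)
    · exact htnot (hDlow t h0 (by omega))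
  have classifyD : ∀ m, v3 n - v2 n < m → m ∈ Dset n →
      (m = v2 n - v1 n) ∨ ∃ j, 1 ≤ j ∧ j ≤ n ∧ m = v3 j - v1 j := by
    intro m hm hmem
    obtain ⟨j, hj, hc⟩ := Dmem.1 hmem
    have hj1 : 1 ≤ j := by
      rcases Nat.eq_zero_or_pos j with rfl | h
      · exfalso
        rcases hc with h | h | h <;> rw [h] at hm <;>
          simp [v1_zero, v2_zero, v3_zero] at hm <;> omega
      · exact h
    rcases hc with hc | hc | hc
    · rcases Nat.lt_or_ge j n with h | h
      · exfalso
        have := gxy H j n hj1 h le_rfl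
        omega
      · have : j = n := by omega
        subst this
        exact Or.inl hc
    · exfalso
      have : v3 j - v2 j ≤ v3 n - v2 n := by
        rcases Nat.lt_or_ge j n with h | h
        · have := gy H j n hj1 h le_rfl; omega
        · have : j = n := by omega
          subst this; omega
      omega
    · exact Or.inr ⟨j, hj1, hj, hc⟩
  have hxn_small : v2 n - v1 n ≤ (v3 n - v2 n) + 2 := hE2n
  -- upper bound
  have hup : t ≤ (v3 n - v2 n) + 4 := by
    by_contra h
    push_neg at h
    have m1 := htlt ((v3 n - v2 n) + 1) (by omega)
    have m2 := htlt ((v3 n - v2 n) + 2) (by omega)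
    have m3 := htlt ((v3 n - v2 n) + 3) (by omega)
    have m4 := htlt ((v3 n - v2 n) + 4) (by omega)
    rcases classifyD _ (by omega) m3 with h3 | ⟨j3, hj3a, hj3b, h3⟩
    · omega
    rcases classifyD _ (by omega) m4 with h4 | ⟨j4, hj4a, hj4b, h4⟩
    · omega
    have := twoZ H j3 j4 hj3a hj4a hj3b hj4b (by omega)
    omega
  refine ⟨hyt, hup, ?_, htnot, htlt, ?_⟩
  · -- t = y + 4 → x = y + 2
    intro h4
    by_contra hx
    have m1 := htlt ((v3 n - v2 n) + 1) (by omega)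
    have m2 := htlt ((v3 n - v2 n) + 2) (by omega)
    have m3 := htlt ((v3 n - v2 n) + 3) (by omega)
    rcases classifyD _ (by omega) m2 with h2 | ⟨j2, hj2a, hj2b, h2⟩
    · omega
    rcases classifyD _ (by omega) m3 with h3 | ⟨j3, hj3a, hj3b, h3⟩
    · omega
    have hz23 := twoZ H j2 j3 hj2a hj3a hj2b hj3b (by omega)
    rcases classifyD _ (by omega) m1 with h1 | ⟨j1, hj1a, hj1b, h1⟩
    · omega
    have hz12 := twoZ H j1 j2 hj1a hj2a hj1b hj2b (by omega)
    omega
  · -- x_n < t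
    rcases Nat.lt_or_ge (v2 n - v1 n) ((v3 n - v2 n) + 2) with h | h
    · -- x ≤ y + 1 ≤ t, and x ∈ D, t ∉ D
      have hxmem : v2 n - v1 n ∈ Dset n := Dmem.2 ⟨n, le_rfl, Or.inl rfl⟩
      rcases Nat.lt_or_ge (v2 n - v1 n) t with hh | hh
      · exact hh
      · exfalso
        have : v2 n - v1 n = t := by omega
        exact htnot (this ▸ hxmem)
    · -- x = y + 2, use hK: y+1 ∈ D, so t ≥ y+2 = x, and x ∈ D
      have hxeq : v2 n - v1 n = (v3 n - v2 n) + 2 := by omega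
      have hy1 := hKn hxeq
      have hxmem : v2 n - v1 n ∈ Dset n := Dmem.2 ⟨n, le_rfl, Or.inl rfl⟩
      have ht2 : (v3 n - v2 n) + 2 ≤ t := by
        by_contra hh
        push_neg at hh
        have : t = (v3 n - v2 n) + 1 := by omega
        exact htnot (this ▸ hy1)
      rcases Nat.lt_or_ge (v2 n - v1 n) t with hh | hh
      · exact hh
      · exfalso
        have : v2 n - v1 n = t := by omega
        exact htnot (this ▸ hxmem)

lemma step_b {n : ℕ} (hn : 1 ≤ n) (H : ∀ j, 1 ≤ j → j ≤ n → Good j) :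
    v1 (n+1) < v2 (n+1) ∧ (v2 (n+1) - v1 (n+1)) ∉ Dset n ∧ v2 (n+1) ∉ Fset n ∧
      mex (Dset n) ≤ v2 (n+1) - v1 (n+1) ∧
      v2 (n+1) - v1 (n+1) ≤ mex (Dset n) + 2 ∧
      (v2 (n+1) - v1 (n+1) = mex (Dset n) + 2 → mex (Dset n) + 1 ∈ Dset n) := by
  obtain ⟨h1n, hABn, hBCn, hE2n, hyx, hDlow, hKn, hFb, _⟩ := H n hn le_rfl
  obtain ⟨ha_gt, ha_le, hAnot, hAlt⟩ := step_a hn H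
  obtain ⟨hyt, hup, ht4, htnot, htlt, hxt⟩ := step_t hn H
  set t := mex (Dset n) with htdef
  have hUbfin : ((fun d => v1 (n+1) + d) '' Dset n ∪ Set.Icc 1 (v1 (n+1)) ∪ Fset n).Finite :=
    (((Dset_finite n).image _).union (Set.finite_Icc _ _)).union (Fset_finite n)
  have hmemUb : ∀ k, k ∈ ((fun d => v1 (n+1) + d) '' Dset n ∪ Set.Icc 1 (v1 (n+1)) ∪ Fset n) ↔
      ((∃ d ∈ Dset n, k = v1 (n+1) + d) ∨ (1 ≤ k ∧ k ≤ v1 (n+1)) ∨ k ∈ Fset n) := by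
    intro k
    constructor
    · rintro ((⟨d, hd, hk⟩ | h) | h)
      · exact Or.inl ⟨d, hd, hk.symm⟩
      · exact Or.inr (Or.inl h)
      · exact Or.inr (Or.inr h)
    · rintro (⟨d, hd, hk⟩ | h | h)
      · exact Or.inl (Or.inl ⟨d, hd, hk.symm⟩)
      · exact Or.inl (Or.inr h)
      · exact Or.inr h
  have hBnot : ¬ ((∃ d ∈ Dset n, v2 (n+1) = v1 (n+1) + d) ∨ (1 ≤ v2 (n+1) ∧ v2 (n+1) ≤ v1 (n+1)) ∨
      v2 (n+1) ∈ Fset n) := by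
    intro hh
    have h2 := (hmemUb _).2 hh
    revert h2
    rw [v2_succ]
    exact mex_not_mem (exists_not_mem_of_finite hUbfin)
  have hBlt : ∀ k < v2 (n+1), ((∃ d ∈ Dset n, k = v1 (n+1) + d) ∨ (1 ≤ k ∧ k ≤ v1 (n+1)) ∨
      k ∈ Fset n) := by
    intro k hk
    rw [← hmemUb]
    rw [v2_succ] at hk
    exact mem_of_lt_mex hk
  have hb_gt : v1 (n+1) < v2 (n+1) := by
    rcases Nat.lt_or_ge (v1 (n+1)) (v2 (n+1)) with h | h
    · exact h
    · exfalso
      rcases Nat.eq_zero_or_pos (v2 (n+1)) with h0 | h0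
      · exact hBnot (Or.inr (Or.inr (h0 ▸ zero_mem_F n)))
      · exact hBnot (Or.inr (Or.inl ⟨h0, h⟩))
  set u : ℕ := v2 (n+1) - v1 (n+1) with hudef
  have hbu : v2 (n+1) = v1 (n+1) + u := by omega
  have hu_notD : u ∉ Dset n := fun h => hBnot (Or.inl ⟨u, h, hbu⟩)
  have hu_notF : v2 (n+1) ∉ Fset n := fun h => hBnot (Or.inr (Or.inr h))
  have hu_min : ∀ w, 1 ≤ w → w < u → w ∈ Dset n ∨ v1 (n+1) + w ∈ Fset n := by
    intro w h1 h2
    rcases hBlt (v1 (n+1) + w) (by omega) with (⟨d, hd, hk⟩ | h | h)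
    · have : w = d := by omega
      exact Or.inl (this ▸ hd)
    · omega
    · exact Or.inr h
  have hu_ge : t ≤ u := by
    by_contra h
    push_neg at h
    exact hu_notD (htlt u h)
  -- no v2-value can block at positions ≥ v1 (n+1) + t
  have hnoB : ∀ m, v1 (n+1) + t ≤ m → m ∈ Fset n → ∃ j, 1 ≤ j ∧ j ≤ n ∧ m = v3 j := by
    intro m hm hmem
    obtain ⟨j, hj, hc⟩ := Fmem.1 hmem
    have hj1 : 1 ≤ j := by
      rcases Nat.eq_zero_or_pos j with rfl | h
      · exfalso
        rcases hc with h | h | h <;> rw [h] at hm <;>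
          simp [v1_zero, v2_zero, v3_zero] at hm <;> omega
      · exact h
    rcases hc with hc | hc | hc
    · exfalso
      have : v1 j ≤ v1 n := by
        rcases Nat.lt_or_ge j n with h | h
        · have := gv1 H j n hj1 h le_rfl; omega
        · have : j = n := by omega
          subst this; omega
      omega
    · exfalso
      have : v2 j ≤ v2 n := by
        rcases Nat.lt_or_ge j n with h | h
        · have := gv2 H j n hj1 h le_rfl; omega
        · have : j = n := by omega
          subst this; omega
      -- v2 n = v1 n + x_n, x_n < t, v1 n < v1 (n+1)
      omega
    · exact ⟨j, hj1, hj, hc⟩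
  have classifyD : ∀ m, v3 n - v2 n < m → m ∈ Dset n →
      (m = v2 n - v1 n) ∨ ∃ j, 1 ≤ j ∧ j ≤ n ∧ m = v3 j - v1 j := by
    intro m hm hmem
    obtain ⟨j, hj, hc⟩ := Dmem.1 hmem
    have hj1 : 1 ≤ j := by
      rcases Nat.eq_zero_or_pos j with rfl | h
      · exfalso
        rcases hc with h | h | h <;> rw [h] at hm <;>
          simp [v1_zero, v2_zero, v3_zero] at hm <;> omega
      · exact h
    rcases hc with hc | hc | hc
    · rcases Nat.lt_or_ge j n with h | h
      · exfalso
        have := gxy H j n hj1 h le_rfl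
        omega
      · have : j = n := by omega
        subst this
        exact Or.inl hc
    · exfalso
      have : v3 j - v2 j ≤ v3 n - v2 n := by
        rcases Nat.lt_or_ge j n with h | h
        · have := gy H j n hj1 h le_rfl; omega
        · have : j = n := by omega
          subst this; omega
      omega
    · exact Or.inr ⟨j, hj1, hj, hc⟩
  -- main candidate analysis
  have hmain : u ≤ t + 2 ∧ (u = t + 2 → t + 1 ∈ Dset n) := by
    rcases Nat.lt_or_ge (t + 2) u with hcase | hcase
    · -- show contradiction
      exfalso
      have f0 : v1 (n+1) + t ∈ Fset n := by
        rcases hu_min t (by omega) (by omega) with h | h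
        · exact absurd h htnot
        · exact h
      obtain ⟨j0, hj0a, hj0b, h0⟩ := hnoB _ (le_refl _) f0
      have f1 : t + 1 ∈ Dset n := by
        rcases hu_min (t+1) (by omega) (by omega) with h | h
        · exact h
        · exfalso
          obtain ⟨j1, hj1a, hj1b, h1⟩ := hnoB _ (by omega) h
          have := twoC H j0 j1 hj0a hj1a hj0b hj1b (by omega)
          omega
      have f1' : ∃ j, 1 ≤ j ∧ j ≤ n ∧ t + 1 = v3 j - v1 j := by
        rcases classifyD (t+1) (by omega) f1 with h | h
        · exact absurd h (by omega)
        · exact h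
      obtain ⟨j1, hj1a, hj1b, h1⟩ := f1'
      -- t + 2 fails too
      rcases hu_min (t+2) (by omega) (by omega) with h | h
      · rcases classifyD (t+2) (by omega) h with h2 | ⟨j2, hj2a, hj2b, h2⟩
        · omega
        · have := twoZ H j1 j2 hj1a hj2a hj1b hj2b (by omega)
          omega
      · obtain ⟨j2, hj2a, hj2b, h2⟩ := hnoB _ (by omega) h
        have := twoC H j0 j2 hj0a hj2a hj0b hj2b (by omega)
        omega
    · refine ⟨hcase, ?_⟩
      intro hu2
      have f0 : v1 (n+1) + t ∈ Fset n := by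
        rcases hu_min t (by omega) (by omega) with h | h
        · exact absurd h htnot
        · exact h
      obtain ⟨j0, hj0a, hj0b, h0⟩ := hnoB _ (le_refl _) f0
      rcases hu_min (t+1) (by omega) (by omega) with h | h
      · exact h
      · exfalso
        obtain ⟨j1, hj1a, hj1b, h1⟩ := hnoB _ (by omega) h
        have := twoC H j0 j1 hj0a hj1a hj0b hj1b (by omega)
        omega
  exact ⟨hb_gt, hu_notD, hu_notF, hu_ge, hmain.1, hmain.2⟩

lemma step_c {n : ℕ} (hn : 1 ≤ n) (H : ∀ j, 1 ≤ j → j ≤ n → Good j) :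
    v3 (n+1) = v2 (n+1) + mex (Dset n) := by
  obtain ⟨h1n, hABn, hBCn, hE2n, hyx, hDlow, hKn, hFb, _⟩ := H n hn le_rfl
  obtain ⟨ha_gt, ha_le, hAnot, hAlt⟩ := step_a hn H
  obtain ⟨hyt, hup, ht4, htnot, htlt, hxt⟩ := step_t hn H
  obtain ⟨hb_gt, hu_notD, hu_notF, hu_ge, hu_le, hu_K⟩ := step_b hn H
  set t := mex (Dset n) with htdef
  have ht1 : 1 ≤ t := by
    rcases Nat.eq_zero_or_pos t with h0 | h0
    · exact absurd (h0 ▸ zero_mem_D n) htnot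
    · exact h0
  have hb2 : v2 n < v2 (n+1) := by omega
  rw [v3_succ]
  apply mex_eq
  · rintro ((⟨d, hd, hk⟩ | hk) | hk)
    · have hk' : v2 (n+1) + d = v2 (n+1) + t := hk
      have : d = t := by omega
      exact htnot (this ▸ hd)
    · rw [Set.mem_Icc] at hk
      omega
    · have := hFb _ hk
      omega
  · intro m hm
    rcases Nat.eq_zero_or_pos m with rfl | h0
    · exact Or.inr (zero_mem_F n)
    rcases Nat.lt_or_ge (v2 (n+1)) m with h | h
    · exact Or.inl (Or.inl ⟨m - v2 (n+1), htlt _ (by omega), show v2 (n+1) + (m - v2 (n+1)) = m by omega⟩)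
    · exact Or.inl (Or.inr (Set.mem_Icc.2 ⟨h0, h⟩))

lemma step_good {n : ℕ} (hn : 1 ≤ n) (H : ∀ j, 1 ≤ j → j ≤ n → Good j) :
    Good (n+1) := by
  obtain ⟨h1n, hABn, hBCn, hE2n, hyx, hDlow, hKn, hFb, _⟩ := H n hn le_rfl
  obtain ⟨ha_gt, ha_le, hAnot, hAlt⟩ := step_a hn H
  obtain ⟨hyt, hup, ht4, htnot, htlt, hxt⟩ := step_t hn H
  obtain ⟨hb_gt, hu_notD, hu_notF, hu_ge, hu_le, hu_K⟩ := step_b hn H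
  have hc := step_c hn H
  set t := mex (Dset n) with htdef
  have ht1 : 1 ≤ t := by
    rcases Nat.eq_zero_or_pos t with h0 | h0
    · exact absurd (h0 ▸ zero_mem_D n) htnot
    · exact h0
  -- key arithmetic facts
  have hy' : v3 (n+1) - v2 (n+1) = t := by omega
  have hx' : v2 (n+1) - v1 (n+1) = v2 (n+1) - v1 (n+1) := rfl
  refine ⟨by omega, by omega, by omega, ?_, ?_, ?_, ?_, ?_, ?_⟩
  · -- x' ≤ y' + 2
    omega
  · -- y' ≤ x'
    omega
  · -- Dlow for n+1
    intro k hk1 hk2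
    rw [hy'] at hk2
    rcases Nat.lt_or_ge k t with h | h
    · exact Dset_mono (by omega) (htlt k h)
    · have : k = t := by omega
      subst this
      exact Dmem.2 ⟨n+1, le_rfl, Or.inr (Or.inl hy'.symm)⟩
  · -- K for n+1
    intro hk
    rw [hy'] at hk ⊢
    exact Dset_mono (by omega) (hu_K (by omega))
  · -- F bound
    intro k hk
    obtain ⟨j, hj, hcs⟩ := Fmem.1 hk
    rcases Nat.lt_or_ge j (n+1) with h | h
    · have : k ≤ v3 n := hFb _ (Fmem.2 ⟨j, by omega, hcs⟩)
      omega
    · have : j = n + 1 := by omega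
      subst this
      rcases hcs with h | h | h <;> omega
  · -- gaps
    intro _
    simp only [Nat.add_sub_cancel]
    have hyg4 : t ≤ (v3 n - v2 n) + 4 := hup
    have hcgap : v3 (n+1) ≤ v3 n + 12 := by
      rcases Nat.lt_or_ge t ((v3 n - v2 n) + 4) with h | h
      · omega
      · have heq : t = (v3 n - v2 n) + 4 := by omega
        have := ht4 heq
        omega
    refine ⟨by omega, by omega, by omega, by omega, hcgap, by omega, by omega,
      by omega, by omega, by omega⟩

lemma Good_all : ∀ n, 1 ≤ n → Good n := by
  intro n
  induction n using Nat.strong_induction_on with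
  | _ n ih =>
    intro hn
    rcases Nat.lt_or_ge n 2 with h | h
    · have : n = 1 := by omega
      subst this
      exact Good_one
    · have hn1 : n - 1 ≥ 1 := by omega
      have H : ∀ j, 1 ≤ j → j ≤ n - 1 → Good j := by
        intro j hj1 hj2
        exact ih j (by omega) hj1
      have := step_good hn1 H
      rwa [show n - 1 + 1 = n by omega] at this


theorem stmt12 : ∀ n : ℕ, (v3 (n + 1) : ℤ) - v3 n ∈ Set.Icc (3 : ℤ) 12 := by
  intro n
  simp only [Set.mem_Icc]
  rcases Nat.eq_zero_or_pos n with rfl | hn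
  · rw [v3_zero, v3_one]
    omega
  · have hg := Good_all (n+1) (by omega)
    have := (hg.2.2.2.2.2.2.2.2 (by omega))
    simp only [Nat.add_sub_cancel] at this
    omega
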